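/- Let Z be a reflexive, separable real Banach space, let D, E ⊆ Z, and let (D_k)_{k∈ℕ}, (E_k)_{k∈ℕ} be sequences of subsets of Z such that D × E = Δ-lim_{k→∞} (D_k × E_k). Assume the equi-transversality condition: there are constants c > 0 and b ≥ 0, independent of k, such that ‖y − z‖_Z ≥ c(‖y‖_Z + ‖z‖_Z) − b for all k ∈ ℕ and all (y, z) ∈ D_k × E_k. If (y_k, z_k) ∈ Z × Z is a sequence with y_k ∈ D_k and z_k ∈ E_k for all sufficiently large k and ‖y_k − z_k‖_Z → 0, then there exists z ∈ D ∩ E and a strictly increasing sequence (k_j) such that y_{k_j} converges weakly to z, z_{k_j} converges weakly to z, and ‖y_{k_j} − z_{k_j}‖_Z → 0 (i.e., (z, z) = Δ-lim_{j→∞} (y_{k_j}, z_{k_j})). -/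

import Mathlib

open Filter Topology

/-- Weak convergence of a sequence in a normed space: `f (y k) → f a` for every
continuous linear functional `f`. -/
def WeakConvergesTo {Z : Type*} [NormedAddCommGroup Z] [NormedSpace ℝ Z]
    (y : ℕ → Z) (a : Z) : Prop :=
  ∀ f : StrongDual ℝ Z, Tendsto (fun k => f (y k)) atTop (𝓝 (f a))

/-- Data convergence: `y_k ⇀ a`, `z_k ⇀ b`, and `y_k - z_k → a - b` strongly. -/
def DataConvergesTo {Z : Type*} [NormedAddCommGroup Z] [NormedSpace ℝ Z]
    (y z : ℕ → Z) (a b : Z) : Prop :=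
  WeakConvergesTo y a ∧ WeakConvergesTo z b ∧
    Tendsto (fun k => ‖(y k - z k) - (a - b)‖) atTop (𝓝 0)

/-- (DC1): every point of `D × E` is a data limit of a sequence of points of `D_k × E_k`. -/
def DC1 {Z : Type*} [NormedAddCommGroup Z] [NormedSpace ℝ Z]
    (D E : Set Z) (Dk Ek : ℕ → Set Z) : Prop :=
  ∀ a ∈ D, ∀ b ∈ E, ∃ y z : ℕ → Z,
    (∀ k, y k ∈ Dk k ∧ z k ∈ Ek k) ∧ DataConvergesTo y z a b

/-- (DC2): data limits of subsequences of points of `D_k × E_k` belong to `D × E`. -/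
def DC2 {Z : Type*} [NormedAddCommGroup Z] [NormedSpace ℝ Z]
    (D E : Set Z) (Dk Ek : ℕ → Set Z) : Prop :=
  ∀ kj : ℕ → ℕ, StrictMono kj → ∀ (y z : ℕ → Z) (a b : Z),
    (∀ j, y j ∈ Dk (kj j) ∧ z j ∈ Ek (kj j)) →
    DataConvergesTo y z a b → a ∈ D ∧ b ∈ E

section MyAuxiliary
open NormedSpace Set

lemma my_sep_of_dual_sep (X : Type*) [NormedAddCommGroup X] [NormedSpace ℝ X]
    [TopologicalSpace.SeparableSpace (StrongDual ℝ X)] :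
    TopologicalSpace.SeparableSpace X := by
  set g : ℕ → StrongDual ℝ X := TopologicalSpace.denseSeq (StrongDual ℝ X) with hgdef
  have hg : DenseRange g := TopologicalSpace.denseRange_denseSeq _
  have hx : ∀ n : ℕ, ∃ x : X, ‖x‖ ≤ 1 ∧ ‖g n‖ / 2 ≤ g n x := by
    intro n
    rcases eq_or_ne (g n) 0 with h | h
    · exact ⟨0, by simp, by simp [h]⟩
    · have hpos : (0:ℝ) < ‖g n‖ := norm_pos_iff.mpr h
      obtain ⟨x, hx1, hx2⟩ := (g n).exists_lt_apply_of_lt_opNorm (show ‖g n‖/2 < ‖g n‖ by linarith)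
      rcases le_or_gt 0 (g n x) with h' | h'
      · rw [Real.norm_eq_abs, abs_of_nonneg h'] at hx2
        exact ⟨x, hx1.le, hx2.le⟩
      · refine ⟨-x, by simpa using hx1.le, ?_⟩
        rw [Real.norm_eq_abs, abs_of_neg h'] at hx2
        rw [map_neg]; linarith
  choose x hx1 hx2 using hx
  set T := (Submodule.span ℝ (Set.range x)).topologicalClosure with hTdef
  have hxT : ∀ n, x n ∈ T := fun n =>
    Submodule.le_topologicalClosure _ (Submodule.subset_span (Set.mem_range_self n))
  have hTtop : T = ⊤ := by
    by_contra hne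
    obtain ⟨p, hp⟩ : ∃ p, p ∉ T := by
      by_contra h; push_neg at h
      exact hne (Submodule.eq_top_iff'.mpr h)
    obtain ⟨f, u, hfu, hup⟩ := geometric_hahn_banach_closed_point
      (T.convex) (Submodule.isClosed_topologicalClosure _) hp
    have hf0 : ∀ a ∈ T, f a = 0 := by
      intro a ha
      by_contra hfa
      have := hfu (((u + 1) / f a) • a) (T.smul_mem _ ha)
      rw [map_smul, smul_eq_mul, div_mul_cancel₀ _ hfa] at this
      linarith
    have hu0 : 0 < u := by have := hfu 0 T.zero_mem; simpa using this
    have hfp : 0 < f p := lt_trans hu0 hup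
    have hfne : (0:ℝ) < ‖f‖ := by
      refine norm_pos_iff.mpr ?_
      intro h; rw [h] at hfp; simp at hfp
    obtain ⟨n, hn⟩ := hg.exists_dist_lt f (show (0:ℝ) < ‖f‖/3 by linarith)
    rw [dist_eq_norm] at hn
    have h1 : ‖g n‖ / 2 ≤ ‖f - g n‖ := by
      have : g n (x n) = (g n - f) (x n) := by
        rw [ContinuousLinearMap.sub_apply, hf0 _ (hxT n)]; ring
      have h2 : g n (x n) ≤ ‖g n - f‖ := by
        rw [this]
        calc (g n - f) (x n) ≤ ‖(g n - f) (x n)‖ := le_abs_self _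
        _ ≤ ‖g n - f‖ * ‖x n‖ := (g n - f).le_opNorm _
        _ ≤ ‖g n - f‖ * 1 := by
            exact mul_le_mul_of_nonneg_left (hx1 n) (norm_nonneg _)
        _ = ‖g n - f‖ := mul_one _
      rw [norm_sub_rev] at h2
      exact le_trans (hx2 n) h2
    have h3 : ‖f‖ ≤ ‖f - g n‖ + ‖g n‖ := by
      calc ‖f‖ = ‖(f - g n) + g n‖ := by rw [sub_add_cancel]
      _ ≤ ‖f - g n‖ + ‖g n‖ := norm_add_le _ _
    linarith
  have hdense : Dense (Submodule.span ℝ (Set.range x) : Set X) := by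
    have : (T : Set X) = closure (Submodule.span ℝ (Set.range x) : Set X) :=
      Submodule.topologicalClosure_coe _
    rw [dense_iff_closure_eq, ← this, hTtop]
    rfl
  have hsep : TopologicalSpace.IsSeparable (Submodule.span ℝ (Set.range x) : Set X) :=
    (Set.countable_range x).isSeparable.span
  have : TopologicalSpace.IsSeparable (Set.univ : Set X) := by
    rw [← hdense.closure_eq]
    exact hsep.closure
  exact TopologicalSpace.isSeparable_univ_iff.mp this

lemma my_weak_subseq {Z : Type*} [NormedAddCommGroup Z] [NormedSpace ℝ Z] [CompleteSpace Z]
    [TopologicalSpace.SeparableSpace Z]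
    (hrefl : Function.Surjective (NormedSpace.inclusionInDoubleDual ℝ Z))
    (x : ℕ → Z) (M : ℝ) (hM : ∀ k, ‖x k‖ ≤ M) :
    ∃ w, ∃ φ : ℕ → ℕ, StrictMono φ ∧ WeakConvergesTo (fun j => x (φ j)) w := by
  haveI : TopologicalSpace.SeparableSpace (StrongDual ℝ (StrongDual ℝ Z)) :=
    hrefl.denseRange.separableSpace (inclusionInDoubleDual ℝ Z).continuous
  haveI : TopologicalSpace.SeparableSpace (StrongDual ℝ Z) := my_sep_of_dual_sep _
  have hM0 : (0:ℝ) ≤ M := le_trans (norm_nonneg _) (hM 0)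
  set g : ℕ → StrongDual ℝ Z := TopologicalSpace.denseSeq (StrongDual ℝ Z) with hgdef
  have hg : DenseRange g := TopologicalSpace.denseRange_denseSeq _
  set S : Set (ℕ → ℝ) := Set.pi Set.univ fun n => Set.Icc (-(‖g n‖ * M)) (‖g n‖ * M) with hSdef
  have hS : IsCompact S := isCompact_univ_pi fun n => isCompact_Icc
  have hmemS : ∀ k, (fun n => g n (x k)) ∈ S := by
    intro k n _
    have h1 : |g n (x k)| ≤ ‖g n‖ * M := by
      calc |g n (x k)| = ‖g n (x k)‖ := rfl
      _ ≤ ‖g n‖ * ‖x k‖ := (g n).le_opNorm _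
      _ ≤ ‖g n‖ * M := mul_le_mul_of_nonneg_left (hM k) (norm_nonneg _)
    exact abs_le.mp h1
  obtain ⟨v, -, φ, hφ, hconv⟩ := hS.tendsto_subseq hmemS
  have hptwise : ∀ n, Tendsto (fun j => g n (x (φ j))) atTop (𝓝 (v n)) := by
    intro n
    exact (continuous_apply n).continuousAt.tendsto.comp hconv
  have hcauchy : ∀ f : StrongDual ℝ Z, CauchySeq fun j => f (x (φ j)) := by
    intro f
    rw [Metric.cauchySeq_iff]
    intro ε hε
    obtain ⟨n, hn⟩ := hg.exists_dist_lt f (show (0:ℝ) < ε / (4 * (M + 1)) by positivity)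
    rw [dist_eq_norm] at hn
    have hcn : CauchySeq fun j => g n (x (φ j)) := (hptwise n).cauchySeq
    rw [Metric.cauchySeq_iff] at hcn
    obtain ⟨N, hN⟩ := hcn (ε / 2) (by positivity)
    refine ⟨N, fun i hi j hj => ?_⟩
    have key : ∀ k, |f (x k) - g n (x k)| ≤ ε / 4 := by
      intro k
      calc |f (x k) - g n (x k)| = ‖(f - g n) (x k)‖ := by
            rw [ContinuousLinearMap.sub_apply]; rfl
      _ ≤ ‖f - g n‖ * ‖x k‖ := (f - g n).le_opNorm _
      _ ≤ (ε / (4 * (M + 1))) * (M + 1) := by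
            apply mul_le_mul hn.le (by linarith [hM k]) (norm_nonneg _) (by positivity)
      _ = ε / 4 := by field_simp
    have hNij := hN i hi j hj
    rw [Real.dist_eq] at hNij ⊢
    calc |f (x (φ i)) - f (x (φ j))|
        ≤ |f (x (φ i)) - g n (x (φ i))| + |g n (x (φ i)) - g n (x (φ j))|
          + |g n (x (φ j)) - f (x (φ j))| := by
          have := abs_sub_le (f (x (φ i))) (g n (x (φ i))) (f (x (φ j)))
          have h2 := abs_sub_le (g n (x (φ i))) (g n (x (φ j))) (f (x (φ j)))
          linarith
    _ < ε / 4 + ε / 2 + ε / 4 := by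
          have k1 := key (φ i)
          have k2 := key (φ j)
          rw [abs_sub_comm] at k2
          linarith
    _ = ε := by ring
  set L0 : StrongDual ℝ Z → ℝ := fun f => limUnder atTop fun j => f (x (φ j)) with hL0def
  have ht : ∀ f : StrongDual ℝ Z, Tendsto (fun j => f (x (φ j))) atTop (𝓝 (L0 f)) := fun f =>
    (hcauchy f).tendsto_limUnder
  have htp : Tendsto (fun j (f : StrongDual ℝ Z) => inclusionInDoubleDual ℝ Z (x (φ j)) f)
      atTop (𝓝 L0) := by
    rw [tendsto_pi_nhds]
    exact fun f => ht f
  set L : StrongDual ℝ (StrongDual ℝ Z) :=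
    continuousLinearMapOfTendsto (fun j => inclusionInDoubleDual ℝ Z (x (φ j))) htp with hLdef
  obtain ⟨w, hw⟩ := hrefl L
  refine ⟨w, φ, hφ, fun f => ?_⟩
  have h1 : (f : Z → ℝ) w = L f := by rw [← hw]; rfl
  have h2 : L f = L0 f := rfl
  rw [h1, h2]
  exact ht f

end MyAuxiliary

/-- In a reflexive separable Banach space, if `D × E` is the data limit of
`D_k × E_k`, equi-transversality holds, the sequence `(y_k, z_k)` eventually lies in
`D_k × E_k`, and `‖y_k - z_k‖ → 0`, then there is `z ∈ D ∩ E` which is the data limit of a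
subsequence, i.e. `(z, z) = Δ-lim (y_{k_j}, z_{k_j})`. -/
theorem statement0 {Z : Type*} [NormedAddCommGroup Z] [NormedSpace ℝ Z] [CompleteSpace Z]
    [TopologicalSpace.SeparableSpace Z]
    (hrefl : Function.Surjective (NormedSpace.inclusionInDoubleDual ℝ Z))
    (D E : Set Z) (Dk Ek : ℕ → Set Z)
    (hDC1 : DC1 D E Dk Ek) (hDC2 : DC2 D E Dk Ek)
    (c b : ℝ) (hc : 0 < c) (hb : 0 ≤ b)
    (htrans : ∀ k, ∀ y ∈ Dk k, ∀ z ∈ Ek k, c * (‖y‖ + ‖z‖) - b ≤ ‖y - z‖)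
    (y z : ℕ → Z)
    (hmem : ∀ᶠ k in atTop, y k ∈ Dk k ∧ z k ∈ Ek k)
    (hdiff : Tendsto (fun k => ‖y k - z k‖) atTop (𝓝 0)) :
    ∃ w, w ∈ D ∩ E ∧ ∃ kj : ℕ → ℕ, StrictMono kj ∧
      WeakConvergesTo (fun j => y (kj j)) w ∧
      WeakConvergesTo (fun j => z (kj j)) w ∧
      Tendsto (fun j => ‖y (kj j) - z (kj j)‖) atTop (𝓝 0) := by

  have hsmall : ∀ᶠ k in atTop, ‖y k - z k‖ < 1 :=
    hdiff.eventually (gt_mem_nhds (by norm_num : (0:ℝ) < 1))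
  obtain ⟨N₀, hN₀⟩ := eventually_atTop.mp (hmem.and hsmall)
  set M : ℝ := (1 + b) / c with hMdef
  have hbound : ∀ k, N₀ ≤ k → ‖y k‖ ≤ M ∧ ‖z k‖ ≤ M := by
    intro k hk
    obtain ⟨⟨hyk, hzk⟩, hs⟩ := hN₀ k hk
    have h1 := htrans k (y k) hyk (z k) hzk
    have h2 : c * (‖y k‖ + ‖z k‖) ≤ 1 + b := by linarith
    have h3 : ‖y k‖ + ‖z k‖ ≤ M := by
      rw [hMdef, le_div_iff₀ hc]; linarith
    constructor
    · linarith [norm_nonneg (z k)]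
    · linarith [norm_nonneg (y k)]
  obtain ⟨w, φ, hφ, hYw⟩ := my_weak_subseq hrefl (fun j => y (j + N₀)) M
    (fun j => (hbound (j + N₀) (Nat.le_add_left _ _)).1)
  obtain ⟨w', ψ, hψ, hZw⟩ := my_weak_subseq hrefl (fun j => z (φ j + N₀)) M
    (fun j => (hbound (φ j + N₀) (Nat.le_add_left _ _)).2)
  set kj : ℕ → ℕ := fun j => φ (ψ j) + N₀ with hkjdef
  have hkj : StrictMono kj := fun i j hij => by
    simp only [hkjdef]
    exact Nat.add_lt_add_right (hφ (hψ hij)) _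
  have hyw : WeakConvergesTo (fun j => y (kj j)) w := fun f =>
    (hYw f).comp hψ.tendsto_atTop
  have hzw' : WeakConvergesTo (fun j => z (kj j)) w' := fun f => hZw f
  have hd0 : Tendsto (fun j => ‖y (kj j) - z (kj j)‖) atTop (𝓝 0) :=
    hdiff.comp hkj.tendsto_atTop
  have hww' : w = w' := by
    rw [NormedSpace.eq_iff_forall_dual_eq ℝ]
    intro f
    have ha : Tendsto (fun j => f (y (kj j)) - f (z (kj j))) atTop (𝓝 (f w - f w')) :=
      (hyw f).sub (hzw' f)
    have hb2 : Tendsto (fun j => f (y (kj j)) - f (z (kj j))) atTop (𝓝 0) := by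
      refine squeeze_zero_norm (fun j => ?_) (by simpa using hd0.const_mul ‖f‖)
      calc ‖f (y (kj j)) - f (z (kj j))‖ = ‖f (y (kj j) - z (kj j))‖ := by rw [map_sub]
      _ ≤ ‖f‖ * ‖y (kj j) - z (kj j)‖ := f.le_opNorm _
    have := tendsto_nhds_unique ha hb2
    linarith
  subst hww'
  have hdc : DataConvergesTo (fun j => y (kj j)) (fun j => z (kj j)) w w :=
    ⟨hyw, hzw', by simpa using hd0⟩
  obtain ⟨hwD, hwE⟩ := hDC2 kj hkj _ _ w w
    (fun j => hN₀ (kj j) (Nat.le_add_left _ _) |>.1) hdc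
  exact ⟨w, ⟨hwD, hwE⟩, kj, hkj, hyw, hzw', hd0⟩
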